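/- Let Gamma be a finite subset of N^2 and phi_Gamma(z,w) = sum_{(alpha,beta) in Gamma} |z|^{2 alpha} |w|^{2 beta}. Then there exist constants 0 < c <= C (depending only on Gamma) such that for all (z,w) in C^2: c * phi_{Gamma^{(1)}}(z,w) <= det(H_{phi_Gamma}(z,w)) <= C * phi_{Gamma^{(1)}}(z,w), where Gamma^{(1)} = { (alpha,beta) + (gamma,delta) - (1,1) : (alpha,beta), (gamma,delta) in Gamma linearly independent }. -/

import Mathlib

/-- Wirtinger derivative `∂/∂z` (first coordinate) of a function on `ℂ²`. -/
noncomputable def dz (f : ℂ × ℂ → ℂ) (p : ℂ × ℂ) : ℂ :=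
  (1 / 2) * (fderiv ℝ f p (1, 0) - Complex.I * fderiv ℝ f p (Complex.I, 0))

/-- Wirtinger derivative `∂/∂z̄` (first coordinate). -/
noncomputable def dzbar (f : ℂ × ℂ → ℂ) (p : ℂ × ℂ) : ℂ :=
  (1 / 2) * (fderiv ℝ f p (1, 0) + Complex.I * fderiv ℝ f p (Complex.I, 0))

/-- Wirtinger derivative `∂/∂w` (second coordinate). -/
noncomputable def dw (f : ℂ × ℂ → ℂ) (p : ℂ × ℂ) : ℂ :=
  (1 / 2) * (fderiv ℝ f p (0, 1) - Complex.I * fderiv ℝ f p (0, Complex.I))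

/-- Wirtinger derivative `∂/∂w̄` (second coordinate). -/
noncomputable def dwbar (f : ℂ × ℂ → ℂ) (p : ℂ × ℂ) : ℂ :=
  (1 / 2) * (fderiv ℝ f p (0, 1) + Complex.I * fderiv ℝ f p (0, Complex.I))

/-- The model monomial weight `φ_Γ(z,w) = ∑_{(α,β)∈Γ} |z|^{2α} |w|^{2β}`. -/
noncomputable def phiGamma (Γ : Finset (ℕ × ℕ)) (p : ℂ × ℂ) : ℝ :=
  ∑ q ∈ Γ, ‖p.1‖ ^ (2 * q.1) * ‖p.2‖ ^ (2 * q.2)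

/-- `Γ⁽¹⁾ = {(α,β)+(γ,δ) : (α,β),(γ,δ) ∈ Γ linearly independent} - (1,1)`. -/
def GammaOne (Γ : Finset (ℕ × ℕ)) : Finset (ℕ × ℕ) :=
  ((Γ ×ˢ Γ).filter (fun q => q.1.1 * q.2.2 ≠ q.1.2 * q.2.1)).image
    (fun q => (q.1.1 + q.2.1 - 1, q.1.2 + q.2.2 - 1))

/-- `Γ⁽²⁾ = (Γ_r - (1,0)) ∪ (Γ_u - (0,1))`. -/
def GammaTwo (Γ : Finset (ℕ × ℕ)) : Finset (ℕ × ℕ) :=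
  (Γ.filter (fun q => q.1 ≠ 0)).image (fun q => (q.1 - 1, q.2)) ∪
    (Γ.filter (fun q => q.2 ≠ 0)).image (fun q => (q.1, q.2 - 1))

/-- The determinant of the complex Hessian of `φ_Γ` (a real number). -/
noncomputable def detHessian (Γ : Finset (ℕ × ℕ)) (p : ℂ × ℂ) : ℝ :=
  letI φC : ℂ × ℂ → ℂ := fun q => (phiGamma Γ q : ℂ)
  (dz (dzbar φC) p * dw (dwbar φC) p - dz (dwbar φC) p * dw (dzbar φC) p).re

/-- The trace of the complex Hessian of `φ_Γ` (a real number). -/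
noncomputable def trHessian (Γ : Finset (ℕ × ℕ)) (p : ℂ × ℂ) : ℝ :=
  letI φC : ℂ × ℂ → ℂ := fun q => (phiGamma Γ q : ℂ)
  (dz (dzbar φC) p + dw (dwbar φC) p).re

/-- The value of the Hermitian form of the complex Hessian of `φ_Γ` at `p` on the
vector `v`, i.e. `(H_{φ_Γ}(p) v, v) = ∑_{j,k} ∂²φ/∂z_j∂z̄_k v_j v̄_k`. -/
noncomputable def hessForm (Γ : Finset (ℕ × ℕ)) (p : ℂ × ℂ) (v : ℂ × ℂ) : ℝ :=
  letI φC : ℂ × ℂ → ℂ := fun q => (phiGamma Γ q : ℂ)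
  (dz (dzbar φC) p * v.1 * (starRingEnd ℂ) v.1
    + dz (dwbar φC) p * v.1 * (starRingEnd ℂ) v.2
    + dw (dzbar φC) p * v.2 * (starRingEnd ℂ) v.1
    + dw (dwbar φC) p * v.2 * (starRingEnd ℂ) v.2).re

/-- The least eigenvalue `λ_Γ` of the complex Hessian of `φ_Γ`, as the infimum of the
Rayleigh quotient. -/
noncomputable def lamGamma (Γ : Finset (ℕ × ℕ)) (p : ℂ × ℂ) : ℝ :=
  sInf {r : ℝ | ∃ v : ℂ × ℂ, v ≠ 0 ∧ r = hessForm Γ p v / (‖v.1‖ ^ 2 + ‖v.2‖ ^ 2)}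


open Complex

noncomputable def mono (a b c d : ℕ) (p : ℂ × ℂ) : ℂ :=
  p.1 ^ a * (starRingEnd ℂ p.1) ^ b * p.2 ^ c * (starRingEnd ℂ p.2) ^ d

noncomputable def e1 : ℂ × ℂ →L[ℝ] ℂ := ContinuousLinearMap.fst ℝ ℂ ℂ
noncomputable def e2 : ℂ × ℂ →L[ℝ] ℂ := ContinuousLinearMap.snd ℝ ℂ ℂ
noncomputable def c1 : ℂ × ℂ →L[ℝ] ℂ :=
  (Complex.conjCLE : ℂ ≃L[ℝ] ℂ).toContinuousLinearMap.comp e1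
noncomputable def c2 : ℂ × ℂ →L[ℝ] ℂ :=
  (Complex.conjCLE : ℂ ≃L[ℝ] ℂ).toContinuousLinearMap.comp e2

noncomputable def monoD (a b c d : ℕ) (p : ℂ × ℂ) : ℂ × ℂ →L[ℝ] ℂ :=
  ((a : ℂ) * mono (a-1) b c d p) • e1 + ((b : ℂ) * mono a (b-1) c d p) • c1
    + ((c : ℂ) * mono a b (c-1) d p) • e2 + ((d : ℂ) * mono a b c (d-1) p) • c2

lemma pow_hasFDerivAt {E : Type*} [NormedAddCommGroup E] [NormedSpace ℝ E]
    {f : E → ℂ} {f' : E →L[ℝ] ℂ} {x : E} (h : HasFDerivAt f f' x) (n : ℕ) :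
    HasFDerivAt (fun x => f x ^ n) (((n : ℂ) * f x ^ (n-1)) • f') x := by
  induction n with
  | zero =>
      have h0 : ((0 : ℕ) : ℂ) * f x ^ (0 - 1) = 0 := by simp
      rw [h0]
      have h1 : (0 : ℂ) • f' = 0 := by ext v; simp
      rw [h1]
      simpa using hasFDerivAt_const (𝕜 := ℝ) (1 : ℂ) x
  | succ n ih =>
    have := ih.fun_mul h
    rw [show (fun x => f x ^ (n+1)) = fun x => f x ^ n * f x from funext fun x => pow_succ _ _]
    refine this.congr_fderiv ?_
    ext v
    simp only [ContinuousLinearMap.add_apply, ContinuousLinearMap.smul_apply, smul_eq_mul]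
    rcases n with _ | m
    · simp
    · simp only [Nat.add_sub_cancel, Nat.succ_sub_one]
      push_cast
      ring

lemma mono_hasFDerivAt (a b c d : ℕ) (p : ℂ × ℂ) :
    HasFDerivAt (mono a b c d) (monoD a b c d p) p := by
  have h1 : HasFDerivAt (fun p : ℂ × ℂ => p.1) e1 p := hasFDerivAt_fst
  have h2 : HasFDerivAt (fun p : ℂ × ℂ => starRingEnd ℂ p.1) c1 p :=
    (Complex.conjCLE.hasFDerivAt).comp p h1
  have h3 : HasFDerivAt (fun p : ℂ × ℂ => p.2) e2 p := hasFDerivAt_snd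
  have h4 : HasFDerivAt (fun p : ℂ × ℂ => starRingEnd ℂ p.2) c2 p :=
    (Complex.conjCLE.hasFDerivAt).comp p h3
  have H := (((pow_hasFDerivAt h1 a).fun_mul (pow_hasFDerivAt h2 b)).fun_mul
      (pow_hasFDerivAt h3 c)).fun_mul (pow_hasFDerivAt h4 d)
  refine H.congr_fderiv ?_
  ext v <;>
    simp only [monoD, mono, e1, e2, c1, c2, ContinuousLinearMap.add_apply,
      ContinuousLinearMap.smul_apply, ContinuousLinearMap.comp_apply,
      ContinuousLinearMap.inl_apply, ContinuousLinearMap.inr_apply,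
      ContinuousLinearMap.coe_fst', ContinuousLinearMap.coe_snd',
      ContinuousLinearEquiv.coe_coe, Complex.conjCLE_apply, smul_eq_mul, map_zero, map_one] <;>
    simp <;> ring

section sums
variable {ι : Type*} (s : Finset ι) (c : ι → ℂ) (A B C D : ι → ℕ) (p : ℂ × ℂ)

lemma sum_hasFDerivAt :
    HasFDerivAt (fun p => ∑ i ∈ s, c i * mono (A i) (B i) (C i) (D i) p)
      (∑ i ∈ s, c i • monoD (A i) (B i) (C i) (D i) p) p :=
  HasFDerivAt.fun_sum fun i _ => (mono_hasFDerivAt _ _ _ _ p).const_mul (c i)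

lemma dz_sum :
    dz (fun p => ∑ i ∈ s, c i * mono (A i) (B i) (C i) (D i) p) p
      = ∑ i ∈ s, c i * (A i) * mono (A i - 1) (B i) (C i) (D i) p := by
  rw [dz, (sum_hasFDerivAt s c A B C D p).fderiv]
  simp only [ContinuousLinearMap.sum_apply, ContinuousLinearMap.smul_apply, monoD,
    ContinuousLinearMap.add_apply, e1, e2, c1, c2, ContinuousLinearMap.comp_apply,
    ContinuousLinearMap.coe_fst', ContinuousLinearMap.coe_snd',
    ContinuousLinearEquiv.coe_coe, Complex.conjCLE_apply, smul_eq_mul,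
    map_one, Complex.conj_I, map_zero, mul_zero, mul_one, add_zero, zero_add]
  rw [Finset.mul_sum, ← Finset.sum_sub_distrib, Finset.mul_sum]
  refine Finset.sum_congr rfl fun i _ => ?_
  linear_combination (c i * (B i) * mono (A i) (B i - 1) (C i) (D i) p
      - c i * (A i) * mono (A i - 1) (B i) (C i) (D i) p) / 2 * Complex.I_mul_I

lemma dzbar_sum :
    dzbar (fun p => ∑ i ∈ s, c i * mono (A i) (B i) (C i) (D i) p) p
      = ∑ i ∈ s, c i * (B i) * mono (A i) (B i - 1) (C i) (D i) p := by
  rw [dzbar, (sum_hasFDerivAt s c A B C D p).fderiv]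
  simp only [ContinuousLinearMap.sum_apply, ContinuousLinearMap.smul_apply, monoD,
    ContinuousLinearMap.add_apply, e1, e2, c1, c2, ContinuousLinearMap.comp_apply,
    ContinuousLinearMap.coe_fst', ContinuousLinearMap.coe_snd',
    ContinuousLinearEquiv.coe_coe, Complex.conjCLE_apply, smul_eq_mul,
    map_one, Complex.conj_I, map_zero, mul_zero, mul_one, add_zero, zero_add]
  rw [Finset.mul_sum, ← Finset.sum_add_distrib, Finset.mul_sum]
  refine Finset.sum_congr rfl fun i _ => ?_
  linear_combination (c i * (A i) * mono (A i - 1) (B i) (C i) (D i) p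
      - c i * (B i) * mono (A i) (B i - 1) (C i) (D i) p) / 2 * Complex.I_mul_I

lemma dw_sum :
    dw (fun p => ∑ i ∈ s, c i * mono (A i) (B i) (C i) (D i) p) p
      = ∑ i ∈ s, c i * (C i) * mono (A i) (B i) (C i - 1) (D i) p := by
  rw [dw, (sum_hasFDerivAt s c A B C D p).fderiv]
  simp only [ContinuousLinearMap.sum_apply, ContinuousLinearMap.smul_apply, monoD,
    ContinuousLinearMap.add_apply, e1, e2, c1, c2, ContinuousLinearMap.comp_apply,
    ContinuousLinearMap.coe_fst', ContinuousLinearMap.coe_snd',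
    ContinuousLinearEquiv.coe_coe, Complex.conjCLE_apply, smul_eq_mul,
    map_one, Complex.conj_I, map_zero, mul_zero, mul_one, add_zero, zero_add]
  rw [Finset.mul_sum, ← Finset.sum_sub_distrib, Finset.mul_sum]
  refine Finset.sum_congr rfl fun i _ => ?_
  linear_combination (c i * (D i) * mono (A i) (B i) (C i) (D i - 1) p
      - c i * (C i) * mono (A i) (B i) (C i - 1) (D i) p) / 2 * Complex.I_mul_I

lemma dwbar_sum :
    dwbar (fun p => ∑ i ∈ s, c i * mono (A i) (B i) (C i) (D i) p) p
      = ∑ i ∈ s, c i * (D i) * mono (A i) (B i) (C i) (D i - 1) p := by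
  rw [dwbar, (sum_hasFDerivAt s c A B C D p).fderiv]
  simp only [ContinuousLinearMap.sum_apply, ContinuousLinearMap.smul_apply, monoD,
    ContinuousLinearMap.add_apply, e1, e2, c1, c2, ContinuousLinearMap.comp_apply,
    ContinuousLinearMap.coe_fst', ContinuousLinearMap.coe_snd',
    ContinuousLinearEquiv.coe_coe, Complex.conjCLE_apply, smul_eq_mul,
    map_one, Complex.conj_I, map_zero, mul_zero, mul_one, add_zero, zero_add]
  rw [Finset.mul_sum, ← Finset.sum_add_distrib, Finset.mul_sum]
  refine Finset.sum_congr rfl fun i _ => ?_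
  linear_combination (c i * (C i) * mono (A i) (B i) (C i - 1) (D i) p
      - c i * (D i) * mono (A i) (B i) (C i) (D i - 1) p) / 2 * Complex.I_mul_I

end sums


lemma mono_mul (a b c d a' b' c' d' : ℕ) (p : ℂ × ℂ) :
    mono a b c d p * mono a' b' c' d' p = mono (a+a') (b+b') (c+c') (d+d') p := by
  simp only [mono, pow_add]; ring

lemma mono_real (m n : ℕ) (p : ℂ × ℂ) :
    mono m m n n p = ((‖p.1‖ ^ (2*m) * ‖p.2‖ ^ (2*n) : ℝ) : ℂ) := by
  have h1 : ∀ (z : ℂ) (m : ℕ), z ^ m * (starRingEnd ℂ) z ^ m = ((‖z‖ ^ (2*m) : ℝ) : ℂ) := by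
    intro z m
    rw [← mul_pow, Complex.mul_conj']
    push_cast
    rw [← pow_mul]
  simp only [mono]
  calc p.1 ^ m * (starRingEnd ℂ) p.1 ^ m * p.2 ^ n * (starRingEnd ℂ) p.2 ^ n
      = (p.1 ^ m * (starRingEnd ℂ) p.1 ^ m) * (p.2 ^ n * (starRingEnd ℂ) p.2 ^ n) := by ring
    _ = ((‖p.1‖ ^ (2*m) : ℝ) : ℂ) * ((‖p.2‖ ^ (2*n) : ℝ) : ℂ) := by rw [h1, h1]
    _ = ((‖p.1‖ ^ (2*m) * ‖p.2‖ ^ (2*n) : ℝ) : ℂ) := by push_cast; ring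

lemma phiC_repr (Γ : Finset (ℕ × ℕ)) :
    (fun q : ℂ × ℂ => ((phiGamma Γ q : ℝ) : ℂ))
      = fun p => ∑ q ∈ Γ, (1 : ℂ) * mono q.1 q.1 q.2 q.2 p := by
  funext p
  rw [phiGamma, Complex.ofReal_sum]
  refine Finset.sum_congr rfl fun q _ => ?_
  rw [one_mul, mono_real]


noncomputable def Xm (m n : ℕ) (p : ℂ × ℂ) : ℝ := ‖p.1‖ ^ (2*m) * ‖p.2‖ ^ (2*n)

lemma mono_realX (m n : ℕ) (p : ℂ × ℂ) : mono m m n n p = ((Xm m n p : ℝ) : ℂ) :=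
  mono_real m n p

lemma Xm_nonneg (m n : ℕ) (p : ℂ × ℂ) : 0 ≤ Xm m n p := by
  unfold Xm; positivity

lemma perterm (a1 a2 b1 b2 : ℕ) (p : ℂ × ℂ) :
    ((a1:ℂ)*(a1:ℂ)) * mono (a1-1) (a1-1) a2 a2 p
        * (((b2:ℂ)*(b2:ℂ)) * mono b1 b1 (b2-1) (b2-1) p)
      - ((a2:ℂ)*(a1:ℂ)) * mono (a1-1) a1 a2 (a2-1) p
        * (((b1:ℂ)*(b2:ℂ)) * mono b1 (b1-1) (b2-1) b2 p)
    = (((((a1:ℝ)^2*(b2:ℝ)^2 - (a1:ℝ)*(a2:ℝ)*(b1:ℝ)*(b2:ℝ))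
        * Xm (a1+b1-1) (a2+b2-1) p : ℝ)) : ℂ) := by
  by_cases h1 : a1 = 0
  · subst h1; simp
  by_cases h4 : b2 = 0
  · subst h4; simp
  have key1 : mono (a1-1) (a1-1) a2 a2 p * mono b1 b1 (b2-1) (b2-1) p
      = ((Xm (a1+b1-1) (a2+b2-1) p : ℝ) : ℂ) := by
    rw [mono_mul, show a1-1+b1 = a1+b1-1 by omega, show a2+(b2-1) = a2+b2-1 by omega,
      mono_realX]
  by_cases h3 : b1 = 0
  · subst h3
    simp only [Nat.cast_zero, mul_zero, zero_mul, sub_zero]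
    calc ((a1:ℂ)*(a1:ℂ)) * mono (a1-1) (a1-1) a2 a2 p
          * (((b2:ℂ)*(b2:ℂ)) * mono 0 0 (b2-1) (b2-1) p)
        = ((a1:ℂ)*(a1:ℂ)*(b2:ℂ)*(b2:ℂ))
            * (mono (a1-1) (a1-1) a2 a2 p * mono 0 0 (b2-1) (b2-1) p) := by ring
      _ = _ := by rw [key1]; push_cast; ring
  by_cases h2 : a2 = 0
  · subst h2
    simp only [Nat.cast_zero, mul_zero, zero_mul, sub_zero]
    calc ((a1:ℂ)*(a1:ℂ)) * mono (a1-1) (a1-1) 0 0 p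
          * (((b2:ℂ)*(b2:ℂ)) * mono b1 b1 (b2-1) (b2-1) p)
        = ((a1:ℂ)*(a1:ℂ)*(b2:ℂ)*(b2:ℂ))
            * (mono (a1-1) (a1-1) 0 0 p * mono b1 b1 (b2-1) (b2-1) p) := by ring
      _ = _ := by rw [key1]; push_cast; ring
  have key2 : mono (a1-1) a1 a2 (a2-1) p * mono b1 (b1-1) (b2-1) b2 p
      = ((Xm (a1+b1-1) (a2+b2-1) p : ℝ) : ℂ) := by
    rw [mono_mul, show a1-1+b1 = a1+b1-1 by omega, show a1+(b1-1) = a1+b1-1 by omega,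
      show a2+(b2-1) = a2+b2-1 by omega, show a2-1+b2 = a2+b2-1 by omega, mono_realX]
  calc ((a1:ℂ)*(a1:ℂ)) * mono (a1-1) (a1-1) a2 a2 p
        * (((b2:ℂ)*(b2:ℂ)) * mono b1 b1 (b2-1) (b2-1) p)
      - ((a2:ℂ)*(a1:ℂ)) * mono (a1-1) a1 a2 (a2-1) p
        * (((b1:ℂ)*(b2:ℂ)) * mono b1 (b1-1) (b2-1) b2 p)
      = ((a1:ℂ)*(a1:ℂ)*(b2:ℂ)*(b2:ℂ))
          * (mono (a1-1) (a1-1) a2 a2 p * mono b1 b1 (b2-1) (b2-1) p)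
        - ((a2:ℂ)*(a1:ℂ)*(b1:ℂ)*(b2:ℂ))
          * (mono (a1-1) a1 a2 (a2-1) p * mono b1 (b1-1) (b2-1) b2 p) := by ring
    _ = _ := by rw [key1, key2]; push_cast; ring

lemma detHessian_eq (Γ : Finset (ℕ × ℕ)) (p : ℂ × ℂ) :
    detHessian Γ p = ∑ q ∈ Γ ×ˢ Γ,
      ((q.1.1:ℝ)^2*(q.2.2:ℝ)^2 - (q.1.1:ℝ)*(q.1.2:ℝ)*(q.2.1:ℝ)*(q.2.2:ℝ))
        * Xm (q.1.1+q.2.1-1) (q.1.2+q.2.2-1) p := by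
  have hzb : dzbar (fun q : ℂ × ℂ => ((phiGamma Γ q : ℝ) : ℂ))
      = fun p => ∑ q ∈ Γ, ((q.1 : ℂ)) * mono q.1 (q.1-1) q.2 q.2 p := by
    funext p
    rw [phiC_repr Γ, dzbar_sum]
    exact Finset.sum_congr rfl fun q _ => by rw [one_mul]
  have hwb : dwbar (fun q : ℂ × ℂ => ((phiGamma Γ q : ℝ) : ℂ))
      = fun p => ∑ q ∈ Γ, ((q.2 : ℂ)) * mono q.1 q.1 q.2 (q.2-1) p := by
    funext p
    rw [phiC_repr Γ, dwbar_sum]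
    exact Finset.sum_congr rfl fun q _ => by rw [one_mul]
  have h11 : dz (dzbar (fun q : ℂ × ℂ => ((phiGamma Γ q : ℝ) : ℂ))) p
      = ∑ q ∈ Γ, ((q.1:ℂ) * (q.1:ℂ)) * mono (q.1-1) (q.1-1) q.2 q.2 p := by
    rw [hzb, dz_sum]
  have h22 : dw (dwbar (fun q : ℂ × ℂ => ((phiGamma Γ q : ℝ) : ℂ))) p
      = ∑ q ∈ Γ, ((q.2:ℂ) * (q.2:ℂ)) * mono q.1 q.1 (q.2-1) (q.2-1) p := by
    rw [hwb, dw_sum]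
  have h12 : dz (dwbar (fun q : ℂ × ℂ => ((phiGamma Γ q : ℝ) : ℂ))) p
      = ∑ q ∈ Γ, ((q.2:ℂ) * (q.1:ℂ)) * mono (q.1-1) q.1 q.2 (q.2-1) p := by
    rw [hwb, dz_sum]
  have h21 : dw (dzbar (fun q : ℂ × ℂ => ((phiGamma Γ q : ℝ) : ℂ))) p
      = ∑ q ∈ Γ, ((q.1:ℂ) * (q.2:ℂ)) * mono q.1 (q.1-1) (q.2-1) q.2 p := by
    rw [hzb, dw_sum]
  show (dz (dzbar (fun q : ℂ × ℂ => ((phiGamma Γ q : ℝ) : ℂ))) p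
      * dw (dwbar (fun q : ℂ × ℂ => ((phiGamma Γ q : ℝ) : ℂ))) p
      - dz (dwbar (fun q : ℂ × ℂ => ((phiGamma Γ q : ℝ) : ℂ))) p
      * dw (dzbar (fun q : ℂ × ℂ => ((phiGamma Γ q : ℝ) : ℂ))) p).re = _
  rw [h11, h22, h12, h21, Finset.sum_mul_sum, Finset.sum_mul_sum,
    ← Finset.sum_sub_distrib]
  have key : (∑ a ∈ Γ, ∑ b ∈ Γ,
      (((a.1:ℂ) * (a.1:ℂ)) * mono (a.1-1) (a.1-1) a.2 a.2 p
        * (((b.2:ℂ) * (b.2:ℂ)) * mono b.1 b.1 (b.2-1) (b.2-1) p)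
      - ((a.2:ℂ) * (a.1:ℂ)) * mono (a.1-1) a.1 a.2 (a.2-1) p
        * (((b.1:ℂ) * (b.2:ℂ)) * mono b.1 (b.1-1) (b.2-1) b.2 p)))
      = ((∑ q ∈ Γ ×ˢ Γ,
      ((q.1.1:ℝ)^2*(q.2.2:ℝ)^2 - (q.1.1:ℝ)*(q.1.2:ℝ)*(q.2.1:ℝ)*(q.2.2:ℝ))
        * Xm (q.1.1+q.2.1-1) (q.1.2+q.2.2-1) p : ℝ) : ℂ) := by
    rw [Complex.ofReal_sum, Finset.sum_product]
    exact Finset.sum_congr rfl fun a _ => Finset.sum_congr rfl fun b _ =>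
      perterm a.1 a.2 b.1 b.2 p
  rw [show (∑ x ∈ Γ,
      ((∑ j ∈ Γ, (x.1:ℂ) * (x.1:ℂ) * mono (x.1-1) (x.1-1) x.2 x.2 p
          * ((j.2:ℂ) * (j.2:ℂ) * mono j.1 j.1 (j.2-1) (j.2-1) p))
        - ∑ j ∈ Γ, (x.2:ℂ) * (x.1:ℂ) * mono (x.1-1) x.1 x.2 (x.2-1) p
          * ((j.1:ℂ) * (j.2:ℂ) * mono j.1 (j.1-1) (j.2-1) j.2 p)))
      = ((∑ q ∈ Γ ×ˢ Γ,
      ((q.1.1:ℝ)^2*(q.2.2:ℝ)^2 - (q.1.1:ℝ)*(q.1.2:ℝ)*(q.2.1:ℝ)*(q.2.2:ℝ))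
        * Xm (q.1.1+q.2.1-1) (q.1.2+q.2.2-1) p : ℝ) : ℂ) from by
    rw [← key]
    exact Finset.sum_congr rfl fun a _ => (Finset.sum_sub_distrib ..).symm]
  rw [Complex.ofReal_re]


lemma detHessian_eq3 (Γ : Finset (ℕ × ℕ)) (p : ℂ × ℂ) :
    detHessian Γ p = ∑ q ∈ (Γ ×ˢ Γ).filter (fun q => q.1.1*q.2.2 ≠ q.1.2*q.2.1),
      (1/2) * ((q.1.1:ℝ)*(q.2.2:ℝ) - (q.1.2:ℝ)*(q.2.1:ℝ))^2
        * Xm (q.1.1+q.2.1-1) (q.1.2+q.2.2-1) p := by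
  have h1 := detHessian_eq Γ p
  have h2 : detHessian Γ p = ∑ q ∈ Γ ×ˢ Γ,
      ((q.2.1:ℝ)^2*(q.1.2:ℝ)^2 - (q.2.1:ℝ)*(q.2.2:ℝ)*(q.1.1:ℝ)*(q.1.2:ℝ))
        * Xm (q.1.1+q.2.1-1) (q.1.2+q.2.2-1) p := by
    rw [h1]
    rw [Finset.sum_product, Finset.sum_product]
    rw [Finset.sum_comm]
    refine Finset.sum_congr rfl fun b _ => Finset.sum_congr rfl fun a _ => ?_
    rw [show a.1 + b.1 = b.1 + a.1 from Nat.add_comm _ _,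
      show a.2 + b.2 = b.2 + a.2 from Nat.add_comm _ _]
  have h3 : detHessian Γ p = ∑ q ∈ Γ ×ˢ Γ,
      (1/2) * ((q.1.1:ℝ)*(q.2.2:ℝ) - (q.1.2:ℝ)*(q.2.1:ℝ))^2
        * Xm (q.1.1+q.2.1-1) (q.1.2+q.2.2-1) p := by
    have h4 : detHessian Γ p + detHessian Γ p = ∑ q ∈ Γ ×ˢ Γ,
        (((q.1.1:ℝ)^2*(q.2.2:ℝ)^2 - (q.1.1:ℝ)*(q.1.2:ℝ)*(q.2.1:ℝ)*(q.2.2:ℝ))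
          * Xm (q.1.1+q.2.1-1) (q.1.2+q.2.2-1) p
        + ((q.2.1:ℝ)^2*(q.1.2:ℝ)^2 - (q.2.1:ℝ)*(q.2.2:ℝ)*(q.1.1:ℝ)*(q.1.2:ℝ))
          * Xm (q.1.1+q.2.1-1) (q.1.2+q.2.2-1) p) := by
      nth_rewrite 1 [h1]
      rw [h2, ← Finset.sum_add_distrib]
    have h5 : detHessian Γ p = (1/2) * (detHessian Γ p + detHessian Γ p) := by ring
    rw [h5, h4, Finset.mul_sum]
    exact Finset.sum_congr rfl fun q _ => by ring
  rw [h3, Finset.sum_filter_of_ne]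
  intro q _ hne
  intro h
  apply hne
  have hc : ((q.1.1:ℝ)*(q.2.2:ℝ)) = (q.1.2:ℝ)*(q.2.1:ℝ) := by exact_mod_cast h
  rw [hc, sub_self]
  ring

lemma phi_as_Xm (S : Finset (ℕ × ℕ)) (p : ℂ × ℂ) :
    phiGamma S p = ∑ q ∈ S, Xm q.1 q.2 p := rfl

/-- `det H_{φ_Γ} ≈ φ_{Γ⁽¹⁾}` with constants depending only on `Γ`. -/
theorem det_hessian_comparable (Γ : Finset (ℕ × ℕ)) :
    ∃ c C : ℝ, 0 < c ∧ c ≤ C ∧ ∀ p : ℂ × ℂ,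
      c * phiGamma (GammaOne Γ) p ≤ detHessian Γ p ∧
      detHessian Γ p ≤ C * phiGamma (GammaOne Γ) p := by
  classical
  set F := (Γ ×ˢ Γ).filter (fun q => q.1.1*q.2.2 ≠ q.1.2*q.2.1) with hF
  set g : (ℕ × ℕ) × ℕ × ℕ → ℕ × ℕ := fun q => (q.1.1+q.2.1-1, q.1.2+q.2.2-1) with hg
  set k : (ℕ × ℕ) × ℕ × ℕ → ℝ :=
    fun q => (1/2) * ((q.1.1:ℝ)*(q.2.2:ℝ) - (q.1.2:ℝ)*(q.2.1:ℝ))^2 with hk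
  have hG1 : GammaOne Γ = F.image g := rfl
  have hk_half : ∀ q ∈ F, (1:ℝ)/2 ≤ k q := by
    intro q hq
    have hne : q.1.1*q.2.2 ≠ q.1.2*q.2.1 := (Finset.mem_filter.mp hq).2
    have h1 : ((q.1.1*q.2.2 : ℕ) : ℤ) ≠ ((q.1.2*q.2.1 : ℕ) : ℤ) := by exact_mod_cast hne
    have h2 : (1:ℤ) ≤ ((q.1.1*q.2.2 : ℕ) : ℤ) - ((q.1.2*q.2.1 : ℕ) : ℤ) ∨
        ((q.1.1*q.2.2 : ℕ) : ℤ) - ((q.1.2*q.2.1 : ℕ) : ℤ) ≤ -1 := by omega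
    have hcast : ((q.1.1:ℝ)*(q.2.2:ℝ) - (q.1.2:ℝ)*(q.2.1:ℝ))
        = ((((q.1.1*q.2.2 : ℕ) : ℤ) - ((q.1.2*q.2.1 : ℕ) : ℤ) : ℤ) : ℝ) := by
      push_cast; ring
    have h3 : (1:ℝ) ≤ ((q.1.1:ℝ)*(q.2.2:ℝ) - (q.1.2:ℝ)*(q.2.1:ℝ))^2 := by
      rw [hcast]
      rcases h2 with h | h
      · have h' : (1:ℝ) ≤ ((((q.1.1*q.2.2 : ℕ) : ℤ) - ((q.1.2*q.2.1 : ℕ) : ℤ) : ℤ) : ℝ) := by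
          exact_mod_cast h
        nlinarith
      · have h' : ((((q.1.1*q.2.2 : ℕ) : ℤ) - ((q.1.2*q.2.1 : ℕ) : ℤ) : ℤ) : ℝ) ≤ -1 := by
          exact_mod_cast h
        nlinarith
    rw [hk]
    dsimp only
    nlinarith
  have hk_nonneg : ∀ q, 0 ≤ k q := fun q => by rw [hk]; positivity
  have hdet : ∀ p : ℂ × ℂ, detHessian Γ p = ∑ q ∈ F, k q * Xm (g q).1 (g q).2 p :=
    fun p => detHessian_eq3 Γ p
  have hphi : ∀ p : ℂ × ℂ, phiGamma (GammaOne Γ) p = ∑ s ∈ F.image g, Xm s.1 s.2 p := by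
    intro p; rw [hG1] at *; exact phi_as_Xm _ p
  have hphi_nonneg : ∀ p : ℂ × ℂ, 0 ≤ phiGamma (GammaOne Γ) p := by
    intro p
    rw [hphi]
    exact Finset.sum_nonneg fun s _ => Xm_nonneg _ _ _
  have hdet_nonneg : ∀ p : ℂ × ℂ, 0 ≤ detHessian Γ p := by
    intro p
    rw [hdet]
    exact Finset.sum_nonneg fun q _ => mul_nonneg (hk_nonneg q) (Xm_nonneg _ _ _)
  set N : ℕ := (GammaOne Γ).card with hN
  refine ⟨1/(2*(N+1)), (∑ q ∈ F, k q) + 1/(2*(N+1)), by positivity, by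
    have : (0:ℝ) ≤ ∑ q ∈ F, k q := Finset.sum_nonneg fun q _ => hk_nonneg q
    linarith, fun p => ⟨?_, ?_⟩⟩
  · -- lower bound
    have hXle : ∀ s ∈ GammaOne Γ, Xm s.1 s.2 p ≤ 2 * detHessian Γ p := by
      intro s hs
      rw [hG1] at hs
      obtain ⟨q, hqF, rfl⟩ := Finset.mem_image.mp hs
      have h1 : k q * Xm (g q).1 (g q).2 p ≤ detHessian Γ p := by
        rw [hdet]
        exact Finset.single_le_sum (f := fun q => k q * Xm (g q).1 (g q).2 p)
          (fun q _ => mul_nonneg (hk_nonneg q) (Xm_nonneg _ _ _)) hqF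
      have h2 := hk_half q hqF
      have h3 := Xm_nonneg (g q).1 (g q).2 p
      nlinarith
    have hsum : phiGamma (GammaOne Γ) p ≤ N * (2 * detHessian Γ p) := by
      rw [hphi, ← hG1]
      calc ∑ s ∈ GammaOne Γ, Xm s.1 s.2 p ≤ ∑ _s ∈ GammaOne Γ, 2 * detHessian Γ p :=
            Finset.sum_le_sum hXle
        _ = N * (2 * detHessian Γ p) := by
            rw [Finset.sum_const, nsmul_eq_mul, ← hN]
    have hd := hdet_nonneg p
    have hNpos : (0:ℝ) < 2*(N+1) := by positivity
    rw [div_mul_eq_mul_div, one_mul, div_le_iff₀ hNpos]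
    nlinarith
  · -- upper bound
    have hXphi : ∀ q ∈ F, Xm (g q).1 (g q).2 p ≤ phiGamma (GammaOne Γ) p := by
      intro q hq
      rw [hphi]
      exact Finset.single_le_sum (f := fun s => Xm s.1 s.2 p)
        (fun s _ => Xm_nonneg _ _ _) (Finset.mem_image_of_mem g hq)
    have : detHessian Γ p ≤ (∑ q ∈ F, k q) * phiGamma (GammaOne Γ) p := by
      rw [hdet, Finset.sum_mul]
      exact Finset.sum_le_sum fun q hq =>
        mul_le_mul_of_nonneg_left (hXphi q hq) (hk_nonneg q)
    have h0 : (0:ℝ) ≤ 1/(2*(N+1)) := by positivity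
    nlinarith [hphi_nonneg p]
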